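/- Let H be a strict tree-based hierarchy with canonical aggregation matrix A, positive initial predictions ŷ, and bottom-heavy weight matrices W(M). Then for every constraint index k (1 ≤ k ≤ K): (1) the ratio λ_k(M)/M^{D(p_k)+1} tends to 0 as M → ∞, and (2) the limit lim_{M→∞} λ_k(M)/M^{D(p_k)} exists and is finite. -/

import Mathlib

open Matrix Filter Topology

/-- A tree-based hierarchy in canonical form on items `Fin N` with `K` constraints.
Constraint `k` has parent item `parent k` and nonempty child set `children k`;
each item is a child in at most one constraint, and the depth function satisfies
`D(c) = D(p_k) + 1` for every child `c` of `p_k`. -/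
structure DepthHierarchy (N K : ℕ) where
  parent : Fin K → Fin N
  children : Fin K → Finset (Fin N)
  children_nonempty : ∀ k, (children k).Nonempty
  parent_notMem : ∀ k, parent k ∉ children k
  child_unique : ∀ k j : Fin K, ∀ n : Fin N, n ∈ children k → n ∈ children j → k = j
  depth : Fin N → ℕ
  depth_child : ∀ k : Fin K, ∀ c ∈ children k, depth c = depth (parent k) + 1

variable {N K : ℕ}

/-- The canonical aggregation matrix of a tree-based hierarchy:
`A k (p_k) = 1`, `A k c = -1` for `c ∈ C_k`, and `0` otherwise. -/
noncomputable def aggMatrixD (T : DepthHierarchy N K) : Matrix (Fin K) (Fin N) ℝ :=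
  fun k n => if n = T.parent k then 1 else if n ∈ T.children k then -1 else 0

/-- The bottom-heavy weight matrix: diagonal with entries `w_n(M) = M^(D n) / yhat n`. -/
noncomputable def bottomW (T : DepthHierarchy N K) (yhat : Fin N → ℝ) (M : ℝ) :
    Matrix (Fin N) (Fin N) ℝ :=
  Matrix.diagonal fun n => M ^ T.depth n / yhat n

/-- `λ(M) = (A W(M)⁻¹ Aᵀ)⁻¹ A ŷ`. -/
noncomputable def lamBot (T : DepthHierarchy N K) (yhat : Fin N → ℝ) (M : ℝ) : Fin K → ℝ :=
  (aggMatrixD T * (bottomW T yhat M)⁻¹ * (aggMatrixD T)ᵀ)⁻¹.mulVec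
    ((aggMatrixD T).mulVec yhat)

/-- `y(M) = ŷ - W(M)⁻¹ Aᵀ λ(M)`. -/
noncomputable def yBot (T : DepthHierarchy N K) (yhat : Fin N → ℝ) (M : ℝ) : Fin N → ℝ :=
  yhat - ((bottomW T yhat M)⁻¹ * (aggMatrixD T)ᵀ).mulVec (lamBot T yhat M)

/-! ### Auxiliary material -/

/-- The rescaled matrix `C(M) = A · diag(ŷ_n / M^{D n}) · Aᵀ · diag(M^{D(p_j)})`. -/
noncomputable def Cfun (T : DepthHierarchy N K) (yhat : Fin N → ℝ) (M : ℝ) :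
    Matrix (Fin K) (Fin K) ℝ :=
  aggMatrixD T * Matrix.diagonal (fun n => yhat n / M ^ T.depth n) * (aggMatrixD T)ᵀ *
    Matrix.diagonal (fun j => M ^ T.depth (T.parent j))

/-- The limit of `Cfun` as `M → ∞`. -/
noncomputable def Cinf (T : DepthHierarchy N K) (yhat : Fin N → ℝ) :
    Matrix (Fin K) (Fin K) ℝ :=
  fun k j => aggMatrixD T k (T.parent j) * yhat (T.parent j)

lemma bottomW_inv (T : DepthHierarchy N K) (yhat : Fin N → ℝ) (hy : ∀ n, 0 < yhat n)
    {M : ℝ} (hM : 0 < M) :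
    (bottomW T yhat M)⁻¹ = Matrix.diagonal (fun n => yhat n / M ^ T.depth n) := by
  apply Matrix.inv_eq_right_inv
  have hfun : (fun n => M ^ T.depth n / yhat n * (yhat n / M ^ T.depth n)) =
      fun _ : Fin N => (1 : ℝ) := by
    funext n
    have h1 : (M : ℝ) ^ T.depth n ≠ 0 := pow_ne_zero _ hM.ne'
    have h2 : yhat n ≠ 0 := (hy n).ne'
    field_simp
  rw [bottomW, Matrix.diagonal_mul_diagonal, hfun, Matrix.diagonal_one]

lemma Cfun_apply (T : DepthHierarchy N K) (yhat : Fin N → ℝ) (M : ℝ) (k j : Fin K) :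
    Cfun T yhat M k j =
      ∑ n, aggMatrixD T k n * (yhat n / M ^ T.depth n) * aggMatrixD T j n *
        M ^ T.depth (T.parent j) := by
  rw [Cfun, Matrix.mul_diagonal, Matrix.mul_apply, Finset.sum_mul]
  refine Finset.sum_congr rfl fun n _ => ?_
  rw [Matrix.mul_diagonal, Matrix.transpose_apply]

lemma agg_parent (T : DepthHierarchy N K) (k : Fin K) :
    aggMatrixD T k (T.parent k) = 1 := by
  simp [aggMatrixD]

/-- If `aggMatrixD T j n ≠ 0` then `n = parent j` or `n ∈ children j`. -/
lemma agg_support (T : DepthHierarchy N K) {j : Fin K} {n : Fin N}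
    (h : aggMatrixD T j n ≠ 0) : n = T.parent j ∨ n ∈ T.children j := by
  by_contra hc
  push_neg at hc
  simp [aggMatrixD, hc.1, hc.2] at h

lemma Cfun_tendsto (T : DepthHierarchy N K) (yhat : Fin N → ℝ) (k j : Fin K) :
    Tendsto (fun M : ℝ => Cfun T yhat M k j) atTop (𝓝 (Cinf T yhat k j)) := by
  have key : ∀ n : Fin N,
      Tendsto (fun M : ℝ => aggMatrixD T k n * (yhat n / M ^ T.depth n) *
          aggMatrixD T j n * M ^ T.depth (T.parent j)) atTop
        (𝓝 (if T.depth n = T.depth (T.parent j) then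
            aggMatrixD T k n * yhat n * aggMatrixD T j n else 0)) := by
    intro n
    by_cases haj : aggMatrixD T j n = 0
    · have : (fun M : ℝ => aggMatrixD T k n * (yhat n / M ^ T.depth n) *
          aggMatrixD T j n * M ^ T.depth (T.parent j)) = fun _ => 0 := by
        funext M; simp [haj]
      rw [this]
      have h0 : (if T.depth n = T.depth (T.parent j) then
          aggMatrixD T k n * yhat n * aggMatrixD T j n else 0) = 0 := by
        simp [haj]
      rw [h0]
      exact tendsto_const_nhds
    · rcases agg_support T haj with hn | hn
      · have hd : T.depth n = T.depth (T.parent j) := by rw [hn]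
        rw [if_pos hd]
        apply Tendsto.congr' _ tendsto_const_nhds
        filter_upwards [eventually_gt_atTop (0 : ℝ)] with M hM
        have h1 : (M : ℝ) ^ T.depth n ≠ 0 := pow_ne_zero _ hM.ne'
        rw [hd] at h1 ⊢
        field_simp
      · have hd : T.depth n = T.depth (T.parent j) + 1 := T.depth_child j n hn
        rw [if_neg (by omega)]
        have : Tendsto (fun M : ℝ =>
            (aggMatrixD T k n * yhat n * aggMatrixD T j n) * M⁻¹) atTop (𝓝 0) := by
          have h := (tendsto_const_nhds (x := aggMatrixD T k n * yhat n * aggMatrixD T j n)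
            (f := atTop (α := ℝ))).mul tendsto_inv_atTop_zero
          simpa using h
        apply Tendsto.congr' _ this
        filter_upwards [eventually_gt_atTop (0 : ℝ)] with M hM
        have hM0 : (M : ℝ) ≠ 0 := hM.ne'
        have h1 : (M : ℝ) ^ T.depth (T.parent j) ≠ 0 := pow_ne_zero _ hM0
        rw [hd, pow_succ]
        field_simp
  have hsum := tendsto_finset_sum Finset.univ (fun n _ => key n)
  have hval : ∑ n, (if T.depth n = T.depth (T.parent j) then
      aggMatrixD T k n * yhat n * aggMatrixD T j n else 0) = Cinf T yhat k j := by
    rw [Finset.sum_eq_single (T.parent j)]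
    · rw [if_pos rfl, agg_parent, mul_one, Cinf]
    · intro n _ hn
      by_cases hd : T.depth n = T.depth (T.parent j)
      · rw [if_pos hd]
        have : aggMatrixD T j n = 0 := by
          by_contra h
          rcases agg_support T h with h' | h'
          · exact hn h'
          · have := T.depth_child j n h'
            omega
        rw [this, mul_zero]
      · rw [if_neg hd]
    · intro h
      exact absurd (Finset.mem_univ _) h
  rw [hval] at hsum
  exact hsum.congr' (by filter_upwards with M using (Cfun_apply T yhat M k j).symm)

lemma Cinf_det_ne_zero (T : DepthHierarchy N K) (hstrict : Function.Injective T.parent)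
    (yhat : Fin N → ℝ) (hy : ∀ n, 0 < yhat n) : (Cinf T yhat).det ≠ 0 := by
  intro hdet
  rw [← Matrix.exists_mulVec_eq_zero_iff] at hdet
  obtain ⟨v, hv, hMv⟩ := hdet
  classical
  set S : Finset (Fin K) := Finset.univ.filter (fun j => v j ≠ 0) with hS
  have hSne : S.Nonempty := by
    obtain ⟨j, hj⟩ := Function.ne_iff.mp hv
    have : v j ≠ 0 := by simpa using hj
    exact ⟨j, by simp [hS, this]⟩
  obtain ⟨k0, hk0S, hmax⟩ := S.exists_max_image (fun j => T.depth (T.parent j)) hSne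
  have hvk0 : v k0 ≠ 0 := by simpa [hS] using hk0S
  have hrow : (Cinf T yhat *ᵥ v) k0 = 0 := by rw [hMv]; rfl
  have hsum : ∑ j, Cinf T yhat k0 j * v j = 0 := by
    simpa [Matrix.mulVec, dotProduct] using hrow
  rw [Finset.sum_eq_single k0] at hsum
  · have hCk : Cinf T yhat k0 k0 = yhat (T.parent k0) := by
      rw [Cinf, agg_parent, one_mul]
    rw [hCk] at hsum
    exact hvk0 (by
      rcases mul_eq_zero.mp hsum with h | h
      · exact absurd h (hy _).ne'
      · exact h)
  · intro j _ hj
    by_cases hvj : v j = 0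
    · rw [hvj, mul_zero]
    · have hjS : j ∈ S := by simp [hS, hvj]
      have hle := hmax j hjS
      have : aggMatrixD T k0 (T.parent j) = 0 := by
        by_contra h
        rcases agg_support T h with h' | h'
        · exact hj (hstrict h')
        · have := T.depth_child k0 _ h'
          omega
      rw [Cinf, this, zero_mul, zero_mul]
  · intro h
    exact absurd (Finset.mem_univ _) h

lemma lamBot_eq_scaled (T : DepthHierarchy N K) (yhat : Fin N → ℝ) (hy : ∀ n, 0 < yhat n)
    (hinv : ∀ M : ℝ, 0 < M →
      IsUnit (aggMatrixD T * (bottomW T yhat M)⁻¹ * (aggMatrixD T)ᵀ).det)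
    {M : ℝ} (hM : 0 < M) (k : Fin K) :
    lamBot T yhat M k = M ^ T.depth (T.parent k) *
      ((Cfun T yhat M)⁻¹ *ᵥ (aggMatrixD T *ᵥ yhat)) k := by
  have hMne : (M : ℝ) ≠ 0 := hM.ne'
  set B := aggMatrixD T * (bottomW T yhat M)⁻¹ * (aggMatrixD T)ᵀ with hB
  set Sd := Matrix.diagonal (fun j : Fin K => M ^ T.depth (T.parent j)) with hSd
  have hCd : Cfun T yhat M = B * Sd := by
    rw [Cfun, hB, hSd, bottomW_inv T yhat hy hM]
  have hSinv : Sd⁻¹ = Matrix.diagonal (fun j : Fin K => (M ^ T.depth (T.parent j))⁻¹) := by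
    apply Matrix.inv_eq_right_inv
    have hfun : (fun j : Fin K => M ^ T.depth (T.parent j) * (M ^ T.depth (T.parent j))⁻¹) =
        fun _ : Fin K => (1 : ℝ) := by
      funext j
      exact mul_inv_cancel₀ (pow_ne_zero _ hMne)
    rw [hSd, Matrix.diagonal_mul_diagonal, hfun, Matrix.diagonal_one]
  have hCinv : (Cfun T yhat M)⁻¹ = Sd⁻¹ * B⁻¹ := by
    rw [hCd, Matrix.mul_inv_rev]
  rw [hCinv, ← Matrix.mulVec_mulVec, hSinv, Matrix.mulVec_diagonal]
  rw [lamBot, ← hB]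
  rw [← mul_assoc, mul_inv_cancel₀ (pow_ne_zero _ hMne), one_mul]

/-- For a strict tree-based hierarchy with bottom-heavy weights,
`λ_k(M) / M^(D(p_k) + 1) → 0` as `M → ∞`, and consequently
`λ_k(M) / M^(D(p_k))` converges to a finite limit. -/
theorem depth_lambdas_converge (T : DepthHierarchy N K)
    (hstrict : Function.Injective T.parent) (yhat : Fin N → ℝ)
    (hy : ∀ n, 0 < yhat n)
    (hinv : ∀ M : ℝ, 0 < M →
      IsUnit (aggMatrixD T * (bottomW T yhat M)⁻¹ * (aggMatrixD T)ᵀ).det)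
    (k : Fin K) :
    Tendsto (fun M : ℝ => lamBot T yhat M k / M ^ (T.depth (T.parent k) + 1))
      atTop (𝓝 0) ∧
    ∃ L : ℝ, Tendsto (fun M : ℝ => lamBot T yhat M k / M ^ T.depth (T.parent k))
      atTop (𝓝 L) := by
  classical
  set w := aggMatrixD T *ᵥ yhat with hw
  set ν := fun M : ℝ => ((Cfun T yhat M)⁻¹ *ᵥ w) k with hν
  -- matrix-level convergence of Cfun to Cinf
  have hC : Tendsto (fun M : ℝ => Cfun T yhat M) atTop (𝓝 (Cinf T yhat)) := by
    refine tendsto_pi_nhds.mpr ?_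
    intro i
    rw [tendsto_pi_nhds]
    intro j
    exact Cfun_tendsto T yhat i j
  have hdet : Tendsto (fun M : ℝ => (Cfun T yhat M).det) atTop (𝓝 (Cinf T yhat).det) :=
    ((continuous_id.matrix_det).tendsto _).comp hC
  have hadj : Tendsto (fun M : ℝ => (Cfun T yhat M).adjugate) atTop
      (𝓝 (Cinf T yhat).adjugate) :=
    ((continuous_id.matrix_adjugate).tendsto _).comp hC
  have hadj_entry : ∀ j : Fin K, Tendsto (fun M : ℝ => (Cfun T yhat M).adjugate k j)
      atTop (𝓝 ((Cinf T yhat).adjugate k j)) := by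
    intro j
    exact (((continuous_apply j).comp (continuous_apply k)).tendsto _).comp hadj
  have hdne := Cinf_det_ne_zero T hstrict yhat hy
  -- explicit formula for ν
  have hν_eq : ∀ M : ℝ, ν M = (Cfun T yhat M).det⁻¹ *
      ∑ j, (Cfun T yhat M).adjugate k j * w j := by
    intro M
    show ((Cfun T yhat M)⁻¹ *ᵥ w) k = _
    rw [Matrix.inv_def, Ring.inverse_eq_inv', Matrix.smul_mulVec]
    simp [Matrix.mulVec, dotProduct]
  set L : ℝ := (Cinf T yhat).det⁻¹ * ∑ j, (Cinf T yhat).adjugate k j * w j with hL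
  have hνL : Tendsto ν atTop (𝓝 L) := by
    have h1 : Tendsto (fun M : ℝ => (Cfun T yhat M).det⁻¹) atTop
        (𝓝 (Cinf T yhat).det⁻¹) := hdet.inv₀ hdne
    have h2 : Tendsto (fun M : ℝ => ∑ j, (Cfun T yhat M).adjugate k j * w j) atTop
        (𝓝 (∑ j, (Cinf T yhat).adjugate k j * w j)) :=
      tendsto_finset_sum _ (fun j _ => (hadj_entry j).mul_const (w j))
    have := h1.mul h2
    rw [← hL] at this
    exact this.congr (fun M => (hν_eq M).symm)
  have hlam : ∀ᶠ M : ℝ in atTop, lamBot T yhat M k = M ^ T.depth (T.parent k) * ν M := by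
    filter_upwards [eventually_gt_atTop (0 : ℝ)] with M hM
    exact lamBot_eq_scaled T yhat hy hinv hM k
  constructor
  · have hgoal : Tendsto (fun M : ℝ => ν M * M⁻¹) atTop (𝓝 0) := by
      simpa using hνL.mul tendsto_inv_atTop_zero
    apply hgoal.congr'
    filter_upwards [hlam, eventually_gt_atTop (0 : ℝ)] with M hMe hM
    rw [hMe, pow_succ]
    have h1 : (M : ℝ) ^ T.depth (T.parent k) ≠ 0 := pow_ne_zero _ hM.ne'
    field_simp
  · refine ⟨L, ?_⟩
    apply hνL.congr'
    filter_upwards [hlam, eventually_gt_atTop (0 : ℝ)] with M hMe hM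
    rw [hMe]
    have h1 : (M : ℝ) ^ T.depth (T.parent k) ≠ 0 := pow_ne_zero _ hM.ne'
    field_simp
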